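/- If a torsion abelian group G admits a positively expansive surjective endomorphism, then G is finite. -/

import Mathlib

lemma closure_fin {G : Type*} [AddCommGroup G] (hG : AddMonoid.IsTorsion G) {s : Set G}
    (hs : s.Finite) : ((AddSubgroup.closure s : AddSubgroup G) : Set G).Finite := by
  have fg : (AddSubgroup.closure s).FG := (AddSubgroup.fg_iff _).2 ⟨s, rfl, hs⟩
  have h1 : AddGroup.FG (AddSubgroup.closure s) := (AddGroup.fg_iff_addSubgroup_fg _).2 fg
  have h2 : Finite (AddSubgroup.closure s) :=
    AddCommGroup.finite_of_fg_torsion _ (IsTorsion.addSubgroup hG _)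
  exact Set.finite_coe_iff.mp h2

/-- `S` is a positive generator for `φ`. -/
def IsPositiveGenerator {G : Type*} [AddCommGroup G] (φ : AddMonoid.End G)
    (S : AddSubgroup G) : Prop :=
  ∀ F : AddSubgroup G, (F : Set G).Finite →
    ∃ n : ℕ, F ≤ ⨆ k ∈ Finset.range (n + 1), S.map (φ ^ k)

/-- `φ` is positively expansive: it has a finite positive generator. -/
def PositivelyExpansive {G : Type*} [AddCommGroup G] (φ : AddMonoid.End G) : Prop :=
  ∃ S : AddSubgroup G, (S : Set G).Finite ∧ IsPositiveGenerator φ S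

theorem stmt17 {G : Type*} [AddCommGroup G] (hG : AddMonoid.IsTorsion G)
    (φ : AddMonoid.End G) (hsurj : Function.Surjective φ)
    (hexp : PositivelyExpansive φ) :
    Finite G := by
  classical
  obtain ⟨S, hSfin, hgen⟩ := hexp
  set T : ℕ → AddSubgroup G := fun n => ⨆ k ∈ Finset.range (n + 1), S.map (φ ^ k) with hT
  have hmap : ∀ k : ℕ, S.map (φ ^ (k + 1)) = (S.map (φ ^ k)).map φ := by
    intro k
    exact (congrArg (fun f : AddMonoid.End G => S.map f) (pow_succ' φ k)).trans (AddSubgroup.map_map S φ (φ ^ k)).symm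
  have hmap0 : S.map (φ ^ 0) = S := by
    exact (congrArg (fun f : AddMonoid.End G => S.map f) (pow_zero φ)).trans S.map_id
  have hmono : Monotone T := by
    apply monotone_nat_of_le_succ
    intro n
    exact biSup_mono fun k hk =>
      Finset.mem_range.mpr (Nat.lt_succ_of_lt (Finset.mem_range.mp hk))
  have hle : ∀ n k, k ∈ Finset.range (n + 1) → S.map (φ ^ k) ≤ T n := by
    intro n k hk
    exact le_iSup₂ (f := fun k (_ : k ∈ Finset.range (n + 1)) => S.map (φ ^ k)) k hk
  have hrec : ∀ n, T (n + 1) = S ⊔ (T n).map φ := by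
    intro n
    apply le_antisymm
    · refine iSup₂_le fun k hk => ?_
      rcases k with _ | j
      · exact hmap0.le.trans le_sup_left
      · rw [hmap j]
        refine le_sup_of_le_right (AddSubgroup.map_mono ?_)
        exact hle n j (Finset.mem_range.mpr (Nat.lt_of_succ_lt_succ (Finset.mem_range.mp hk)))
    · refine sup_le ?_ ?_
      · rw [← hmap0]
        exact hle (n + 1) 0 (Finset.mem_range.mpr (Nat.succ_pos _))
      · refine AddSubgroup.map_le_iff_le_comap.mpr ?_
        refine iSup₂_le fun k hk => ?_
        refine AddSubgroup.map_le_iff_le_comap.mp ?_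
        exact (hmap k).ge.trans (hle (n + 1) (k + 1) (Finset.mem_range.mpr (Nat.succ_lt_succ (Finset.mem_range.mp hk))))
  have hfin : ∀ n, ((T n : AddSubgroup G) : Set G).Finite := by
    intro n
    induction n with
    | zero =>
      have h0 : T 0 = S := by
        rw [hT]
        simp only [Nat.zero_add, Finset.range_one, Finset.mem_singleton, iSup_iSup_eq_left]
        exact hmap0
      rw [h0]; exact hSfin
    | succ n ih =>
      rw [hrec n]
      have himg : (((T n).map φ : AddSubgroup G) : Set G).Finite := by
        exact ih.image ⇑φ
      have hcl : (S ⊔ (T n).map φ) = AddSubgroup.closure (↑S ∪ ↑((T n).map φ)) := by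
        rw [AddSubgroup.closure_union, AddSubgroup.closure_eq, AddSubgroup.closure_eq]
      rw [hcl]
      exact closure_fin hG (hSfin.union himg)
  have hcover : ∀ g : G, ∃ n, g ∈ T n := by
    intro g
    obtain ⟨n, hn⟩ := hgen (AddSubgroup.closure {g}) (closure_fin hG (Set.finite_singleton g))
    exact ⟨n, hn (AddSubgroup.subset_closure (Set.mem_singleton g))⟩
  obtain ⟨m, hm⟩ : ∃ m, S ≤ (T m).map φ := by
    choose t ht using hsurj
    obtain ⟨m, hmF⟩ := hgen (AddSubgroup.closure (t '' S)) (closure_fin hG (hSfin.image t))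
    refine ⟨m, fun s hs => ?_⟩
    exact ⟨t s, hmF (AddSubgroup.subset_closure ⟨s, hs, rfl⟩), ht s⟩
  have heq1 : T (m + 1) = (T m).map φ := by
    rw [hrec m]
    exact le_antisymm (sup_le hm le_rfl) le_sup_right
  have hstab : T (m + 1) = T m := by
    have hsub : (T m : Set G) ⊆ (T (m + 1) : Set G) := hmono (Nat.le_succ m)
    have hcard : (T (m + 1) : Set G).ncard ≤ (T m : Set G).ncard := by
      have : ((T (m + 1) : AddSubgroup G) : Set G) = φ '' (T m) := by
        rw [heq1]; rfl
      rw [this]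
      exact Set.ncard_image_le (hfin m)
    have := Set.eq_of_subset_of_ncard_le hsub hcard (hfin (m + 1))
    exact (SetLike.coe_injective this).symm
  have hstep : ∀ n, T (m + n) = T m := by
    intro n
    induction n with
    | zero => rfl
    | succ n ih =>
      have h1 : T (m + n + 1) = S ⊔ (T (m + n)).map φ := hrec _
      rw [show m + (n + 1) = (m + n) + 1 from rfl, h1, ih, ← hrec m, hstab]
  have hall : ∀ g : G, g ∈ T m := by
    intro g
    obtain ⟨n, hn⟩ := hcover g
    rcases le_total n m with h | h
    · exact hmono h hn
    · obtain ⟨d, rfl⟩ := Nat.exists_eq_add_of_le h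
      exact hstep d ▸ hn
  have : (Set.univ : Set G).Finite := (hfin m).subset fun g _ => hall g
  exact Set.finite_univ_iff.mp this
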